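/- Weak continuity of the Monge–Ampère measure: if convex functions uₙ on an open convex set G ⊆ ℝⁿ converge locally uniformly to a convex function u, then the Monge–Ampère measures of uₙ converge weakly to the Monge–Ampère measure of u (i.e., for every compact K ⊆ G, limsup λ(∂uₙ(K)) ≤ λ(∂u(K)), and for every open U with compact closure in G, liminf λ(∂uₙ(U)) ≥ λ(∂u(U))). -/

import Mathlib

open MeasureTheory Filter Metric Set Bornology
open scoped Topology

/-- The subdifferential of a convex function `z` on `G` at `x`. -/
def subgrad {n : ℕ} (z : EuclideanSpace ℝ (Fin n) → ℝ)
    (G : Set (EuclideanSpace ℝ (Fin n))) (x : EuclideanSpace ℝ (Fin n)) :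
    Set (EuclideanSpace ℝ (Fin n)) :=
  {p | ∀ y ∈ G, z x + (inner ℝ p (y - x) : ℝ) ≤ z y}

/-- The subgradient image `∂z(m) = ⋃_{x ∈ m} ∂z(x)`. -/
def subgradImage {n : ℕ} (z : EuclideanSpace ℝ (Fin n) → ℝ)
    (G m : Set (EuclideanSpace ℝ (Fin n))) : Set (EuclideanSpace ℝ (Fin n)) :=
  ⋃ x ∈ m, subgrad z G x

section Aux

variable {n : ℕ}

local notation "E" => EuclideanSpace ℝ (Fin n)

lemma mem_subgradImage {z : E → ℝ} {G m : Set E} {p : E} :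
    p ∈ subgradImage z G m ↔ ∃ x ∈ m, p ∈ subgrad z G x := by
  simp [subgradImage]

lemma subgradImage_mono {z : E → ℝ} {G s t : Set E} (h : s ⊆ t) :
    subgradImage z G s ⊆ subgradImage z G t := by
  intro p hp
  rcases mem_subgradImage.1 hp with ⟨x, hx, hpx⟩
  exact mem_subgradImage.2 ⟨x, h hx, hpx⟩

lemma subgradImage_subset_closedBall {z : E → ℝ} {G K : Set E} {δ M : ℝ}
    (hδ : 0 < δ) (hsub : cthickening δ K ⊆ G)
    (hM : ∀ x ∈ cthickening δ K, |z x| ≤ M) :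
    subgradImage z G K ⊆ closedBall 0 (2 * M / δ) := by
  rintro p hp
  rcases mem_subgradImage.1 hp with ⟨x, hxK, hx⟩
  have hxth : x ∈ cthickening δ K := self_subset_cthickening K hxK
  have hMx : |z x| ≤ M := hM x hxth
  rw [mem_closedBall_zero_iff]
  rcases eq_or_ne p 0 with rfl | hp0
  · rw [norm_zero]
    have hM0 : (0:ℝ) ≤ M := le_trans (abs_nonneg _) hMx
    positivity
  · set y := x + (δ / ‖p‖) • p with hy
    have hnp : (0:ℝ) < ‖p‖ := norm_pos_iff.2 hp0
    have hyx : y - x = (δ / ‖p‖) • p := by rw [hy]; abel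
    have hdist : dist y x ≤ δ := by
      rw [dist_eq_norm, hyx, norm_smul]
      rw [Real.norm_eq_abs, abs_of_pos (by positivity)]
      field_simp
      exact le_rfl
    have hyth : y ∈ cthickening δ K := mem_cthickening_of_dist_le y x δ K hxK hdist
    have hMy : |z y| ≤ M := hM y hyth
    have hzy := hx y (hsub hyth)
    have hinner : (inner ℝ p (y - x) : ℝ) = δ * ‖p‖ := by
      rw [hyx, real_inner_smul_right, real_inner_self_eq_norm_mul_norm]
      field_simp
    rw [hinner] at hzy
    rw [abs_le] at hMx hMy
    have h2 : δ * ‖p‖ ≤ 2 * M := by linarith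
    rw [le_div_iff₀ hδ]
    linarith [mul_comm δ ‖p‖]

end Aux
section Aux2

variable {n : ℕ}

local notation "E" => EuclideanSpace ℝ (Fin n)

lemma isCompact_subgradImage {z : E → ℝ} {G K : Set E} (hGo : IsOpen G)
    (hz : ContinuousOn z G) (hK : IsCompact K) (hKG : K ⊆ G) :
    IsCompact (subgradImage z G K) := by
  rcases K.eq_empty_or_nonempty with rfl | hne
  · have : subgradImage z G (∅ : Set E) = ∅ := by simp [subgradImage]
    rw [this]; exact isCompact_empty
  obtain ⟨δ, hδ, hsub⟩ := hK.exists_cthickening_subset_open hGo hKG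
  have hKc : IsCompact (cthickening δ K) :=
    Metric.isCompact_of_isClosed_isBounded isClosed_cthickening hK.isBounded.cthickening
  obtain ⟨M, hM⟩ := hKc.exists_bound_of_continuousOn (hz.mono hsub)
  simp only [Real.norm_eq_abs] at hM
  apply Metric.isCompact_of_isClosed_isBounded
  · apply IsSeqClosed.isClosed
    intro pseq p hmem hlim
    choose x hxK hxsub using fun j => mem_subgradImage.1 (hmem j)
    obtain ⟨x0, hx0, φ, hφ, hxlim⟩ := hK.tendsto_subseq hxK
    refine mem_subgradImage.2 ⟨x0, hx0, fun y hy => ?_⟩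
    have hcz : ContinuousAt z x0 := hz.continuousAt (hGo.mem_nhds (hKG hx0))
    have h1 : Filter.Tendsto
        (fun j => z (x (φ j)) + (inner ℝ (pseq (φ j)) (y - x (φ j)) : ℝ)) Filter.atTop
        (𝓝 (z x0 + (inner ℝ p (y - x0) : ℝ))) := by
      refine Filter.Tendsto.add (hcz.tendsto.comp hxlim) ?_
      exact Filter.Tendsto.inner (hlim.comp hφ.tendsto_atTop) (tendsto_const_nhds.sub hxlim)
    exact le_of_tendsto h1 (Filter.Eventually.of_forall fun j => hxsub (φ j) y hy)
  · exact Metric.isBounded_closedBall.subset (subgradImage_subset_closedBall hδ hsub hM)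

lemma tendsto_comp_seq {u : ℕ → E → ℝ} {ulim : E → ℝ} {G K : Set E} (hGo : IsOpen G)
    (hcont : ContinuousOn ulim G)
    (hunif : TendstoLocallyUniformlyOn u ulim Filter.atTop G)
    (hK : IsCompact K) (hKG : K ⊆ G) {φ : ℕ → ℕ} (hφ : Filter.Tendsto φ Filter.atTop Filter.atTop)
    {x : ℕ → E} {x0 : E} (hx : ∀ j, x j ∈ K) (hx0 : x0 ∈ K)
    (hxlim : Filter.Tendsto x Filter.atTop (𝓝 x0)) :
    Filter.Tendsto (fun j => u (φ j) (x j)) Filter.atTop (𝓝 (ulim x0)) := by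
  have hU : TendstoUniformlyOn u ulim Filter.atTop K :=
    (tendstoLocallyUniformlyOn_iff_forall_isCompact hGo).1 hunif K hKG hK
  have hU' : TendstoUniformlyOn (fun j => u (φ j)) ulim Filter.atTop K :=
    fun v hv => hφ.eventually (hU v hv)
  refine hU'.tendsto_comp ((hcont.mono hKG).continuousWithinAt hx0) ?_
  exact tendsto_nhdsWithin_of_tendsto_nhds_of_eventually_within x hxlim
    (Filter.Eventually.of_forall hx)

lemma mem_subgradImage_of_frequently {u : ℕ → E → ℝ} {ulim : E → ℝ} {G K : Set E}
    (hGo : IsOpen G) (hcont : ContinuousOn ulim G)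
    (hunif : TendstoLocallyUniformlyOn u ulim Filter.atTop G)
    (hK : IsCompact K) (hKG : K ⊆ G) {p : E}
    (hfreq : ∃ᶠ k in Filter.atTop, p ∈ subgradImage (u k) G K) :
    p ∈ subgradImage ulim G K := by
  obtain ⟨φ, hφ, hp⟩ := Filter.extraction_of_frequently_atTop hfreq
  choose x hxK hx using fun j => mem_subgradImage.1 (hp j)
  obtain ⟨x0, hx0, ψ, hψ, hxlim⟩ := hK.tendsto_subseq hxK
  refine mem_subgradImage.2 ⟨x0, hx0, fun y hy => ?_⟩
  have h1 : Filter.Tendsto (fun j => u (φ (ψ j)) (x (ψ j))) Filter.atTop (𝓝 (ulim x0)) :=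
    tendsto_comp_seq hGo hcont hunif hK hKG (φ := φ ∘ ψ)
      ((hφ.comp hψ).tendsto_atTop) (fun j => hxK (ψ j)) hx0 hxlim
  have h2 : Filter.Tendsto (fun j => u (φ (ψ j)) y) Filter.atTop (𝓝 (ulim y)) :=
    (hunif.tendsto_at hy).comp (hφ.comp hψ).tendsto_atTop
  have h3 : Filter.Tendsto
      (fun j => u (φ (ψ j)) (x (ψ j)) + (inner ℝ p (y - x (ψ j)) : ℝ)) Filter.atTop
      (𝓝 (ulim x0 + (inner ℝ p (y - x0) : ℝ))) :=
    h1.add (Filter.Tendsto.inner tendsto_const_nhds (tendsto_const_nhds.sub hxlim))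
  exact le_of_tendsto_of_tendsto' h3 h2 fun j => hx (ψ j) y hy

end Aux2
section Aux3

variable {n : ℕ}

local notation "E" => EuclideanSpace ℝ (Fin n)

/-- Restricted Legendre transform: `legw z C p = sup_{x ∈ C} (⟪p,x⟫ - z x)`. -/
noncomputable def legw (z : EuclideanSpace ℝ (Fin n) → ℝ)
    (C : Set (EuclideanSpace ℝ (Fin n))) (p : EuclideanSpace ℝ (Fin n)) : ℝ :=
  sSup ((fun x => (inner ℝ p x : ℝ) - z x) '' C)

lemma legw_bddAbove {z : E → ℝ} {C : Set E} (hC : IsCompact C) (hz : ContinuousOn z C)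
    (p : E) : BddAbove ((fun x => (inner ℝ p x : ℝ) - z x) '' C) :=
  (hC.image_of_continuousOn (((continuous_const.inner continuous_id).continuousOn).sub hz)).bddAbove

lemma le_legw {z : E → ℝ} {C : Set E} (hC : IsCompact C) (hz : ContinuousOn z C)
    {x : E} (hx : x ∈ C) (p : E) : (inner ℝ p x : ℝ) - z x ≤ legw z C p :=
  le_csSup (legw_bddAbove hC hz p) (Set.mem_image_of_mem _ hx)

lemma legw_le {z : E → ℝ} {C : Set E} (hne : C.Nonempty) {p : E} {a : ℝ}
    (h : ∀ x ∈ C, (inner ℝ p x : ℝ) - z x ≤ a) : legw z C p ≤ a := by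
  refine csSup_le (hne.image _) ?_
  rintro _ ⟨x, hx, rfl⟩
  exact h x hx

lemma legw_lipschitz {z : E → ℝ} {C : Set E} (hC : IsCompact C) (hne : C.Nonempty)
    (hz : ContinuousOn z C) {R : ℝ} (hR : ∀ x ∈ C, ‖x‖ ≤ R) :
    LipschitzWith (Real.toNNReal R) (legw z C) := by
  have hR0 : (0:ℝ) ≤ R := le_trans (norm_nonneg _) (hR _ hne.some_mem)
  have key : ∀ p q : E, legw z C p - legw z C q ≤ R * dist p q := by
    intro p q
    rw [sub_le_iff_le_add]
    refine legw_le hne fun x hx => ?_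
    have h1 : (inner ℝ p x : ℝ) - z x = ((inner ℝ q x : ℝ) - z x) + (inner ℝ (p - q) x : ℝ) := by
      rw [inner_sub_left]; ring
    have h2 : (inner ℝ (p - q) x : ℝ) ≤ ‖p - q‖ * ‖x‖ := real_inner_le_norm _ _
    have h3 : ‖p - q‖ * ‖x‖ ≤ ‖p - q‖ * R := by
      exact mul_le_mul_of_nonneg_left (hR x hx) (norm_nonneg _)
    have h4 := le_legw hC hz hx q
    rw [dist_eq_norm]
    rw [h1]
    have : ‖p - q‖ * R = R * ‖p - q‖ := mul_comm _ _
    linarith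
  apply LipschitzWith.of_dist_le_mul
  intro p q
  rw [Real.dist_eq, Real.coe_toNNReal R hR0, abs_sub_le_iff]
  constructor
  · exact key p q
  · rw [dist_comm]; exact key q p

lemma legw_eq_of_subgrad {z : E → ℝ} {G C : Set E} (hC : IsCompact C) (hz : ContinuousOn z C)
    (hCG : C ⊆ G) {x p : E} (hx : x ∈ C) (hp : p ∈ subgrad z G x) :
    legw z C p = (inner ℝ p x : ℝ) - z x := by
  refine le_antisymm (legw_le ⟨x, hx⟩ fun y hy => ?_) (le_legw hC hz hx p)
  have := hp y (hCG hy)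
  rw [inner_sub_right] at this
  linarith

lemma eq_of_subgrad_of_differentiableAt {z : E → ℝ} {G C : Set E}
    (hC : IsCompact C) (hCG : C ⊆ G) (hz : ContinuousOn z C)
    {p x₁ x₂ : E} (hdiff : DifferentiableAt ℝ (legw z C) p)
    (hx₁ : x₁ ∈ C) (hp₁ : p ∈ subgrad z G x₁) (hx₂ : x₂ ∈ C) (hp₂ : p ∈ subgrad z G x₂) :
    x₁ = x₂ := by
  have key : ∀ x ∈ C, p ∈ subgrad z G x → ∀ v : E,
      (fderiv ℝ (legw z C) p) v = (inner ℝ v x : ℝ) := by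
    intro x hx hp v
    set w := legw z C with hw
    -- derivative of t ↦ w (p + t • v) - t * ⟪v,x⟫ at 0
    have h1 : HasDerivAt (fun t : ℝ => p + t • v) v 0 := by
      simpa using ((hasDerivAt_id (0:ℝ)).smul_const v).const_add p
    have hfd : HasFDerivAt w (fderiv ℝ w p) (p + (0:ℝ) • v) := by
      have : p + (0:ℝ) • v = p := by simp
      rw [this]
      exact hdiff.hasFDerivAt
    have h2 : HasDerivAt (fun t : ℝ => w (p + t • v)) ((fderiv ℝ w p) v) 0 :=
      by simpa [Function.comp_def] using hfd.comp_hasDerivAt (0:ℝ) h1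
    have h3 : HasDerivAt (fun t : ℝ => w (p + t • v) - t * (inner ℝ v x : ℝ))
        ((fderiv ℝ w p) v - (inner ℝ v x : ℝ)) 0 :=
      h2.sub (hasDerivAt_mul_const _)
    have hmin : IsLocalMin (fun t : ℝ => w (p + t • v) - t * (inner ℝ v x : ℝ)) 0 := by
      have hwp : w p = (inner ℝ p x : ℝ) - z x := legw_eq_of_subgrad hC hz hCG hx hp
      refine Filter.Eventually.of_forall fun t => ?_
      have hle : (inner ℝ (p + t • v) x : ℝ) - z x ≤ w (p + t • v) := le_legw hC hz hx _
      have hexp : (inner ℝ (p + t • v) x : ℝ) = (inner ℝ p x : ℝ) + t * (inner ℝ v x : ℝ) := by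
        rw [inner_add_left, real_inner_smul_left]
      simp only [zero_smul, add_zero, zero_mul, sub_zero]
      rw [hwp]
      rw [hexp] at hle
      linarith
    have := hmin.hasDerivAt_eq_zero h3
    linarith [this]
  have h1 := key x₁ hx₁ hp₁
  have h2 := key x₂ hx₂ hp₂
  have h3 : ∀ v : E, (inner ℝ v (x₁ - x₂) : ℝ) = 0 := by
    intro v
    rw [inner_sub_right]
    have := (h1 v).symm.trans (h2 v)
    linarith
  have := h3 (x₁ - x₂)
  rwa [inner_self_eq_zero, sub_eq_zero] at this

end Aux3
section Aux4

variable {n : ℕ}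

local notation "E" => EuclideanSpace ℝ (Fin n)

lemma convexOn_sub_inner {z : E → ℝ} {G : Set E} (hGc : Convex ℝ G) (hz : ConvexOn ℝ G z)
    (p : E) : ConvexOn ℝ G (fun y => z y - (inner ℝ p y : ℝ)) := by
  have hlin : ConvexOn ℝ G (fun y : E => -(inner ℝ p y : ℝ)) := by
    refine ⟨hGc, fun x hx y hy a b ha hb hab => le_of_eq ?_⟩
    simp only [inner_add_right, real_inner_smul_right, smul_eq_mul]
    ring
  have h := hz.add hlin
  have heq : (fun y => z y - (inner ℝ p y : ℝ)) = (fun y => z y + -(inner ℝ p y : ℝ)) := by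
    funext y; ring
  rw [heq]
  exact h

/-- A point of `U` minimizing `z - ⟪p,·⟫` over `closure U` yields a global subgradient. -/
lemma subgrad_of_isMinOn {z : E → ℝ} {G U : Set E} (hGo : IsOpen G) (hGc : Convex ℝ G)
    (hz : ConvexOn ℝ G z) (hUo : IsOpen U) (hUG : closure U ⊆ G) {p x : E}
    (hx : x ∈ U)
    (hmin : ∀ y ∈ closure U, z x - (inner ℝ p x : ℝ) ≤ z y - (inner ℝ p y : ℝ)) :
    p ∈ subgrad z G x := by
  have hxG : x ∈ G := hUG (subset_closure hx)
  have hvconv : ConvexOn ℝ G (fun y => z y - (inner ℝ p y : ℝ)) := convexOn_sub_inner hGc hz p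
  have hlocal : IsLocalMinOn (fun y => z y - (inner ℝ p y : ℝ)) G x := by
    have hU : U ∈ 𝓝[G] x := mem_nhdsWithin_of_mem_nhds (hUo.mem_nhds hx)
    filter_upwards [hU] with y hy
    exact hmin y (subset_closure hy)
  have hglobal : IsMinOn (fun y => z y - (inner ℝ p y : ℝ)) G x :=
    IsMinOn.of_isLocalMinOn_of_convexOn hxG hlocal hvconv
  intro y hy
  have := isMinOn_iff.1 hglobal y hy
  rw [inner_sub_right]
  linarith

end Aux4
section Aux5

open Filter

variable {n : ℕ}

local notation "E" => EuclideanSpace ℝ (Fin n)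

lemma eventually_mem_subgradImage {u : ℕ → E → ℝ} {ulim : E → ℝ} {G U : Set E}
    (hGo : IsOpen G) (hGc : Convex ℝ G)
    (hconv : ∀ k, ConvexOn ℝ G (u k)) (hlimconv : ConvexOn ℝ G ulim)
    (hunif : TendstoLocallyUniformlyOn u ulim Filter.atTop G)
    (hUo : IsOpen U) (hUG : closure U ⊆ G) (hUc : IsCompact (closure U))
    {p x₀ : E} (hx₀ : x₀ ∈ U) (hp : p ∈ subgrad ulim G x₀)
    (hdiff : DifferentiableAt ℝ (legw ulim (closure U)) p) :
    ∀ᶠ k in Filter.atTop, p ∈ subgradImage (u k) G U := by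
  have hcont : ContinuousOn ulim G := hlimconv.continuousOn hGo
  by_contra hcon
  rw [Filter.not_eventually] at hcon
  obtain ⟨φ, hφ, hnot⟩ := Filter.extraction_of_frequently_atTop hcon
  have hCne : (closure U).Nonempty := ⟨x₀, subset_closure hx₀⟩
  have hmins : ∀ j, ∃ x ∈ closure U,
      IsMinOn (fun y => u (φ j) y - (inner ℝ p y : ℝ)) (closure U) x :=
    fun j => hUc.exists_isMinOn hCne
      ((((hconv (φ j)).continuousOn hGo).mono hUG).sub
        ((continuous_const.inner continuous_id).continuousOn))
  choose x hxC hxmin using hmins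
  have hxnotU : ∀ j, x j ∉ U := by
    intro j hxU
    apply hnot j
    refine mem_subgradImage.2 ⟨x j, hxU, ?_⟩
    exact subgrad_of_isMinOn hGo hGc (hconv (φ j)) hUo hUG hxU
      (fun y hy => isMinOn_iff.1 (hxmin j) y hy)
  have hBc : IsCompact (closure U ∩ Uᶜ) := hUc.inter_right (isClosed_compl_iff.2 hUo)
  obtain ⟨xs, hxs, ψ, hψ, hxlim⟩ := hBc.tendsto_subseq (fun j => ⟨hxC j, hxnotU j⟩)
  have hineq : ∀ j, u (φ (ψ j)) (x (ψ j)) - (inner ℝ p (x (ψ j)) : ℝ) ≤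
      u (φ (ψ j)) x₀ - (inner ℝ p x₀ : ℝ) :=
    fun j => isMinOn_iff.1 (hxmin (ψ j)) x₀ (subset_closure hx₀)
  have h1 : Tendsto (fun j => u (φ (ψ j)) (x (ψ j)) - (inner ℝ p (x (ψ j)) : ℝ)) atTop
      (𝓝 (ulim xs - (inner ℝ p xs : ℝ))) := by
    refine Filter.Tendsto.sub ?_ (Filter.Tendsto.inner tendsto_const_nhds hxlim)
    exact tendsto_comp_seq hGo hcont hunif hUc hUG (φ := φ ∘ ψ)
      ((hφ.comp hψ).tendsto_atTop) (fun j => hxC (ψ j)) hxs.1 hxlim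
  have h2 : Tendsto (fun j => u (φ (ψ j)) x₀ - (inner ℝ p x₀ : ℝ)) atTop
      (𝓝 (ulim x₀ - (inner ℝ p x₀ : ℝ))) :=
    ((hunif.tendsto_at (hUG (subset_closure hx₀))).comp
      (hφ.comp hψ).tendsto_atTop).sub tendsto_const_nhds
  have hlim_le : ulim xs - (inner ℝ p xs : ℝ) ≤ ulim x₀ - (inner ℝ p x₀ : ℝ) :=
    le_of_tendsto_of_tendsto' h1 h2 hineq
  have hpxs : p ∈ subgrad ulim G xs := by
    intro y hy
    have h0 := hp y hy
    rw [inner_sub_right] at h0 ⊢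
    linarith
  have heq : x₀ = xs := eq_of_subgrad_of_differentiableAt hUc hUG (hcont.mono hUG) hdiff
      (subset_closure hx₀) hp hxs.1 hpxs
  exact hxs.2 (heq ▸ hx₀)

end Aux5
section Main

open Filter

variable {n : ℕ}

local notation "E" => EuclideanSpace ℝ (Fin n)

lemma limsup_part {u : ℕ → E → ℝ} {ulim : E → ℝ} {G : Set E}
    (hGo : IsOpen G) (hconv : ∀ k, ConvexOn ℝ G (u k)) (hlimconv : ConvexOn ℝ G ulim)
    (hunif : TendstoLocallyUniformlyOn u ulim Filter.atTop G)
    {K : Set E} (hKG : K ⊆ G) (hK : IsCompact K) :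
    Filter.limsup (fun k => volume (subgradImage (u k) G K)) Filter.atTop ≤
      volume (subgradImage ulim G K) := by
  have hcont : ContinuousOn ulim G := hlimconv.continuousOn hGo
  have hcontk : ∀ k, ContinuousOn (u k) G := fun k => (hconv k).continuousOn hGo
  rcases K.eq_empty_or_nonempty with rfl | hne
  · have he : ∀ k, subgradImage (u k) G (∅ : Set E) = ∅ := fun k => by simp [subgradImage]
    simp only [he, measure_empty]
    simp
  obtain ⟨δ, hδ, hsub⟩ := hK.exists_cthickening_subset_open hGo hKG
  have hKc' : IsCompact (cthickening δ K) :=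
    Metric.isCompact_of_isClosed_isBounded isClosed_cthickening hK.isBounded.cthickening
  obtain ⟨M, hM⟩ := hKc'.exists_bound_of_continuousOn (hcont.mono hsub)
  simp only [Real.norm_eq_abs] at hM
  have hU : TendstoUniformlyOn u ulim Filter.atTop (cthickening δ K) :=
    (tendstoLocallyUniformlyOn_iff_forall_isCompact hGo).1 hunif _ hsub hKc'
  have hev : ∀ᶠ k in atTop, ∀ x ∈ cthickening δ K, dist (ulim x) (u k x) < 1 :=
    (Metric.tendstoUniformlyOn_iff.1 hU) 1 one_pos
  obtain ⟨N₀, hN₀⟩ := eventually_atTop.1 hev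
  have hball : ∀ k ≥ N₀, subgradImage (u k) G K ⊆ closedBall 0 (2 * (M + 1) / δ) := by
    intro k hk
    refine subgradImage_subset_closedBall hδ hsub fun x hx => ?_
    have h1 := hN₀ k hk x hx
    have h2 := hM x hx
    rw [Real.dist_eq] at h1
    rw [abs_le] at h2 ⊢
    rw [abs_lt] at h1
    constructor <;> linarith
  set A := fun k => subgradImage (u k) G K with hA
  set C := fun N => ⋃ m, A (N₀ + N + m) with hC
  have hmeasA : ∀ k, MeasurableSet (A k) :=
    fun k => (isCompact_subgradImage hGo (hcontk k) hK hKG).isClosed.measurableSet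
  have hCmeas : ∀ N, NullMeasurableSet (C N) volume :=
    fun N => (MeasurableSet.iUnion fun m => hmeasA _).nullMeasurableSet
  have hCanti : Antitone C := by
    intro N N' hNN'
    refine Set.iUnion_subset fun m => ?_
    have e : N₀ + N' + m = N₀ + N + (N' - N + m) := by omega
    rw [e]
    exact Set.subset_iUnion (fun m => A (N₀ + N + m)) _
  have hCball : ∀ N, C N ⊆ closedBall 0 (2 * (M + 1) / δ) :=
    fun N => Set.iUnion_subset fun m => hball _ (by omega)
  have hfin : volume (C 0) ≠ ⊤ :=
    ((measure_mono (hCball 0)).trans_lt measure_closedBall_lt_top).ne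
  have hiInf : volume (⋂ N, C N) = ⨅ N, volume (C N) :=
    hCanti.measure_iInter hCmeas ⟨0, hfin⟩
  have hsubfin : (⋂ N, C N) ⊆ subgradImage ulim G K := by
    intro p hp
    refine mem_subgradImage_of_frequently hGo hcont hunif hK hKG ?_
    rw [frequently_atTop]
    intro N
    have := Set.mem_iInter.1 hp N
    obtain ⟨m, hm⟩ := Set.mem_iUnion.1 this
    exact ⟨N₀ + N + m, by omega, hm⟩
  calc Filter.limsup (fun k => volume (A k)) Filter.atTop
      ≤ ⨅ N, volume (C N) := by
        refine le_iInf fun N => Filter.limsup_le_of_le (by isBoundedDefault) ?_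
        refine eventually_atTop.2 ⟨N₀ + N, fun k hk => ?_⟩
        refine measure_mono ?_
        have e : k = N₀ + N + (k - (N₀ + N)) := by omega
        rw [e]
        exact Set.subset_iUnion (fun m => A (N₀ + N + m)) _
    _ = volume (⋂ N, C N) := hiInf.symm
    _ ≤ volume (subgradImage ulim G K) := measure_mono hsubfin

lemma exists_exhaustion {U : Set E} (hUo : IsOpen U) (hUc : IsCompact (closure U)) :
    ∃ Kseq : ℕ → Set E, Monotone Kseq ∧ (∀ j, IsCompact (Kseq j)) ∧
      (∀ j, Kseq j ⊆ U) ∧ ⋃ j, Kseq j = U := by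
  set Kseq : ℕ → Set E := fun j =>
    closure U ∩ ⋂ (y : E) (_ : y ∉ U), {x | 1 / (j + 1 : ℝ) ≤ dist x y} with hKseq
  have hclosed : ∀ j, IsClosed (Kseq j) := by
    intro j
    refine isClosed_closure.inter (isClosed_iInter fun y => isClosed_iInter fun _ => ?_)
    exact isClosed_le continuous_const (continuous_id.dist continuous_const)
  have hsubU : ∀ j, Kseq j ⊆ U := by
    rintro j x ⟨hx1, hx2⟩
    by_contra hxU
    have := Set.mem_iInter.1 (Set.mem_iInter.1 hx2 x) hxU
    simp only [Set.mem_setOf_eq, dist_self] at this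
    have : (0:ℝ) < 1 / (j + 1 : ℝ) := by positivity
    linarith [Set.mem_iInter.1 (Set.mem_iInter.1 hx2 x) hxU, this]
  refine ⟨Kseq, ?_, ?_, hsubU, ?_⟩
  · intro j j' hjj'
    rintro x ⟨hx1, hx2⟩
    refine ⟨hx1, Set.mem_iInter.2 fun y => Set.mem_iInter.2 fun hy => ?_⟩
    have h1 := Set.mem_iInter.1 (Set.mem_iInter.1 hx2 y) hy
    have h2 : 1 / (j' + 1 : ℝ) ≤ 1 / (j + 1 : ℝ) := by
      apply one_div_le_one_div_of_le (by positivity)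
      have : (j:ℝ) ≤ (j':ℝ) := Nat.cast_le.2 hjj'
      linarith
    exact le_trans h2 h1
  · exact fun j => hUc.of_isClosed_subset (hclosed j) Set.inter_subset_left
  · refine Set.eq_of_subset_of_subset (Set.iUnion_subset hsubU) fun x hx => ?_
    obtain ⟨ε, hε, hball⟩ := Metric.isOpen_iff.1 hUo x hx
    obtain ⟨j, hj⟩ := exists_nat_one_div_lt hε
    refine Set.mem_iUnion.2 ⟨j, subset_closure hx, ?_⟩
    refine Set.mem_iInter.2 fun y => Set.mem_iInter.2 fun hy => ?_
    have hdist : ε ≤ dist x y := by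
      by_contra h
      push_neg at h
      exact hy (hball (by rwa [Metric.mem_ball, dist_comm]))
    exact le_trans hj.le hdist

lemma liminf_part {u : ℕ → E → ℝ} {ulim : E → ℝ} {G : Set E}
    (hGo : IsOpen G) (hGc : Convex ℝ G)
    (hconv : ∀ k, ConvexOn ℝ G (u k)) (hlimconv : ConvexOn ℝ G ulim)
    (hunif : TendstoLocallyUniformlyOn u ulim Filter.atTop G)
    {U : Set E} (hUo : IsOpen U) (hUG : closure U ⊆ G) (hUc : IsCompact (closure U)) :
    volume (subgradImage ulim G U) ≤
      Filter.liminf (fun k => volume (subgradImage (u k) G U)) Filter.atTop := by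
  rcases U.eq_empty_or_nonempty with rfl | hUne
  · have : subgradImage ulim G (∅ : Set E) = ∅ := by simp [subgradImage]
    rw [this, measure_empty]
    exact zero_le
  have hcont : ContinuousOn ulim G := hlimconv.continuousOn hGo
  obtain ⟨Kseq, hmono, hcomp, hsubU, hunion⟩ := exists_exhaustion hUo hUc
  have hrw : subgradImage ulim G U = ⋃ j, subgradImage ulim G (Kseq j) := by
    rw [← hunion]
    ext p
    simp only [subgradImage, Set.mem_iUnion]
    constructor
    · rintro ⟨x, ⟨⟨j, hj⟩, hx⟩⟩
      exact ⟨j, x, hj, hx⟩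
    · rintro ⟨j, x, hj, hx⟩
      exact ⟨x, ⟨j, hj⟩, hx⟩
  rw [hrw, Monotone.measure_iUnion (fun a b h => subgradImage_mono (hmono h))]
  refine iSup_le fun j => ?_
  -- Rademacher null set of the restricted Legendre transform
  have hCne : (closure U).Nonempty := hUne.closure
  obtain ⟨r, hr⟩ := hUc.isBounded.subset_closedBall 0
  have hRnorm : ∀ x ∈ closure U, ‖x‖ ≤ r := fun x hx => mem_closedBall_zero_iff.1 (hr hx)
  have hlip := legw_lipschitz hUc hCne (hcont.mono hUG) hRnorm
  have hae : ∀ᵐ p : E, DifferentiableAt ℝ (legw ulim (closure U)) p :=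
    hlip.ae_differentiableAt
  have hN0 : volume {p : E | ¬ DifferentiableAt ℝ (legw ulim (closure U)) p} = 0 :=
    ae_iff.1 hae
  set Nset := {p : E | ¬ DifferentiableAt ℝ (legw ulim (closure U)) p} with hNset
  set A' := fun k => subgradImage (u k) G U with hA'
  set D := fun M => ⋂ m, A' (M + m) with hD
  have hDmono : Monotone D := by
    intro M M' hMM'
    intro p hp
    refine Set.mem_iInter.2 fun m => ?_
    have e : M' + m = M + (M' - M + m) := by omega
    rw [e]
    exact Set.mem_iInter.1 hp _
  have hincl : subgradImage ulim G (Kseq j) \ Nset ⊆ ⋃ M, D M := by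
    rintro p ⟨hpK, hpN⟩
    obtain ⟨x₀, hx₀, hpx⟩ := mem_subgradImage.1 hpK
    have hdiff : DifferentiableAt ℝ (legw ulim (closure U)) p := not_not.1 hpN
    have hev := eventually_mem_subgradImage hGo hGc hconv hlimconv hunif hUo hUG hUc
      (hsubU j hx₀) hpx hdiff
    obtain ⟨M, hM⟩ := eventually_atTop.1 hev
    exact Set.mem_iUnion.2 ⟨M, Set.mem_iInter.2 fun m => hM (M + m) (Nat.le_add_right _ _)⟩
  calc volume (subgradImage ulim G (Kseq j))
      ≤ volume ((subgradImage ulim G (Kseq j) \ Nset) ∪ Nset) := by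
        refine measure_mono fun p hp => ?_
        by_cases h : p ∈ Nset
        exacts [Or.inr h, Or.inl ⟨hp, h⟩]
    _ ≤ volume (subgradImage ulim G (Kseq j) \ Nset) + volume Nset := measure_union_le _ _
    _ = volume (subgradImage ulim G (Kseq j) \ Nset) := by rw [hN0, add_zero]
    _ ≤ volume (⋃ M, D M) := measure_mono hincl
    _ = ⨆ M, volume (D M) := hDmono.measure_iUnion
    _ ≤ Filter.liminf (fun k => volume (A' k)) Filter.atTop := by
        refine iSup_le fun M => Filter.le_liminf_of_le (by isBoundedDefault) ?_
        refine eventually_atTop.2 ⟨M, fun k hk => ?_⟩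
        refine measure_mono fun p hp => ?_
        have e : k = M + (k - M) := by omega
        rw [e]
        exact Set.mem_iInter.1 hp _

end Main

theorem mongeAmpere_weak_continuity {n : ℕ}
    (G : Set (EuclideanSpace ℝ (Fin n))) (hGo : IsOpen G) (hGc : Convex ℝ G)
    (u : ℕ → EuclideanSpace ℝ (Fin n) → ℝ) (ulim : EuclideanSpace ℝ (Fin n) → ℝ)
    (hconv : ∀ k, ConvexOn ℝ G (u k)) (hlimconv : ConvexOn ℝ G ulim)
    (hunif : TendstoLocallyUniformlyOn (fun k => u k) ulim Filter.atTop G) :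
    (∀ K ⊆ G, IsCompact K →
      Filter.limsup (fun k => volume (subgradImage (u k) G K)) Filter.atTop ≤
        volume (subgradImage ulim G K)) ∧
    (∀ U : Set (EuclideanSpace ℝ (Fin n)), IsOpen U → closure U ⊆ G →
      IsCompact (closure U) →
      volume (subgradImage ulim G U) ≤
        Filter.liminf (fun k => volume (subgradImage (u k) G U)) Filter.atTop) := by
  constructor
  · intro K hKG hK
    exact limsup_part hGo hconv hlimconv hunif hKG hK
  · intro U hUo hUG hUc
    exact liminf_part hGo hGc hconv hlimconv hunif hUo hUG hUc
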